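/- Let n be a finite index type, Q : Matrix n n ℝ a positive semidefinite matrix, μ : n → ℝ, and ε > 0. Suppose v* : n → ℝ maximizes the linear objective v ↦ μ ⬝ᵥ v over the constraint set { v | v ⬝ᵥ (Q *ᵥ v) ≤ ε² }. Then, setting β = (μ ⬝ᵥ v*) / (2·ε²), the vector v* maximizes the soft objective v ↦ μ ⬝ᵥ v − β·(v ⬝ᵥ (Q *ᵥ v)) over all of n → ℝ. -/

import Mathlib

open Matrix

/-- Any solution `v*` of the Bellman-relaxed hard-constrained problem with
bound `ε` solves the Bellman-relaxed soft-constrained problem with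
coefficient `β = (μ ⬝ᵥ v*) / (2 ε²)`. -/
theorem hard_solution_solves_soft
    {n : Type*} [Fintype n]
    (Q : Matrix n n ℝ) (hQ : Q.PosSemidef) (μ : n → ℝ) (ε : ℝ) (hε : 0 < ε)
    (vstar : n → ℝ)
    (hfeas : vstar ⬝ᵥ (Q *ᵥ vstar) ≤ ε ^ 2)
    (hmax : ∀ v : n → ℝ, v ⬝ᵥ (Q *ᵥ v) ≤ ε ^ 2 → μ ⬝ᵥ v ≤ μ ⬝ᵥ vstar) :
    ∀ v : n → ℝ,
      μ ⬝ᵥ v - (μ ⬝ᵥ vstar) / (2 * ε ^ 2) * (v ⬝ᵥ (Q *ᵥ v)) ≤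
      μ ⬝ᵥ vstar - (μ ⬝ᵥ vstar) / (2 * ε ^ 2) * (vstar ⬝ᵥ (Q *ᵥ vstar)) := by
  intro v
  set c := μ ⬝ᵥ vstar with hc
  have hquad : ∀ w : n → ℝ, 0 ≤ w ⬝ᵥ (Q *ᵥ w) := by
    intro w
    have := hQ.dotProduct_mulVec_nonneg w
    simpa using this
  have hc0 : 0 ≤ c := by
    have := hmax 0 (by simp; positivity)
    simpa using this
  have hsmul : ∀ (t : ℝ) (w : n → ℝ),
      (t • w) ⬝ᵥ (Q *ᵥ (t • w)) = t ^ 2 * (w ⬝ᵥ (Q *ᵥ w)) := by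
    intro t w
    rw [mulVec_smul, dotProduct_smul, smul_dotProduct]
    simp [smul_eq_mul]; ring
  have hdot : ∀ (t : ℝ) (w : n → ℝ), μ ⬝ᵥ (t • w) = t * (μ ⬝ᵥ w) := by
    intro t w; rw [dotProduct_smul]; simp
  set q := v ⬝ᵥ (Q *ᵥ v) with hqdef
  have hq0 : 0 ≤ q := hquad v
  set s := Real.sqrt q with hs
  have hs0 : 0 ≤ s := Real.sqrt_nonneg q
  have hs2 : s ^ 2 = q := Real.sq_sqrt hq0
  -- key : ε * (μ ⬝ᵥ v) ≤ c * s
  have key : ε * (μ ⬝ᵥ v) ≤ c * s := by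
    rcases eq_or_lt_of_le hq0 with h0 | hpos
    · -- q = 0 : show μ ⬝ᵥ v ≤ 0
      have hmv : μ ⬝ᵥ v ≤ 0 := by
        by_contra h
        push_neg at h
        have hfeast : ((((c + 1) / (μ ⬝ᵥ v)) • v)) ⬝ᵥ (Q *ᵥ ((((c + 1) / (μ ⬝ᵥ v)) • v))) ≤ ε ^ 2 := by
          rw [hsmul, ← hqdef, ← h0]
          simpa using sq_nonneg ε
        have := hmax _ hfeast
        rw [hdot, div_mul_cancel₀ _ (ne_of_gt h)] at this
        linarith
      have hs0' : s = 0 := by rw [hs, ← h0, Real.sqrt_zero]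
      rw [hs0', mul_zero]
      exact mul_nonpos_of_nonneg_of_nonpos hε.le hmv
    · have hspos : 0 < s := Real.sqrt_pos.mpr hpos
      have hfeast : ((ε / s) • v) ⬝ᵥ (Q *ᵥ ((ε / s) • v)) ≤ ε ^ 2 := by
        rw [hsmul, ← hqdef, div_pow, hs2, div_mul_cancel₀ _ (ne_of_gt hpos)]
      have := hmax _ hfeast
      rw [hdot] at this
      calc ε * (μ ⬝ᵥ v) = (ε / s * (μ ⬝ᵥ v)) * s := by field_simp
        _ ≤ c * s := by nlinarith
  have hβ : c / (2 * ε ^ 2) * (2 * ε ^ 2) = c :=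
    div_mul_cancel₀ _ (by positivity)
  set β := c / (2 * ε ^ 2) with hβd
  have hq' : 0 ≤ vstar ⬝ᵥ (Q *ᵥ vstar) := hquad vstar
  nlinarith [sq_nonneg (s - ε), mul_nonneg hc0 hq', mul_nonneg hc0 (sq_nonneg (s - ε)),
    mul_le_mul_of_nonneg_left hfeas hc0, sq_nonneg ε, mul_pos hε hε]
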